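/- Let N ≥ k ≥ 2 be integers, and let p ≥ 2 be the unique integer with k·(p choose 2) ≤ N < k·((p+1) choose 2). Write N = k·(p choose 2) + q·p + r with integers q, r satisfying 0 ≤ q < k and 0 ≤ r < p. Then M^L(k,N) = k·p − k + q if r ≤ (p−1)/2, and M^L(k,N) = k·p − k + q + 1 − 2(p−r)/(p+1) if r ≥ (p−1)/2. -/

import Mathlib

/-- Number of edges of a finite simple graph. -/
noncomputable def edgeCnt {V : Type} [Fintype V] (G : SimpleGraph V) : ℕ :=
  G.edgeSet.ncard

/-- Number of edges of `G` with both endpoints in `X`. -/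
noncomputable def inducedEdgeCnt {V : Type} [Fintype V] (G : SimpleGraph V) (X : Finset V) : ℕ :=
  {e : Sym2 V | e ∈ G.edgeSet ∧ ∀ v ∈ e, v ∈ X}.ncard

/-- Maximum average degree of a finite simple graph. -/
noncomputable def Mad {V : Type} [Fintype V] (G : SimpleGraph V) : ℝ :=
  sSup {d : ℝ | ∃ X : Finset V, X.Nonempty ∧ d = 2 * (inducedEdgeCnt G X : ℝ) / (X.card : ℝ)}

/-- A `k`-decomposition of the complete graph `K_n`. -/
def IsKDecomp {k n : ℕ} (G : Fin k → SimpleGraph (Fin n)) : Prop :=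
  (∀ i j, i ≠ j → Disjoint (G i).edgeSet (G j).edgeSet) ∧
  (⋃ i, (G i).edgeSet) = (⊤ : SimpleGraph (Fin n)).edgeSet

/-- `M(k,n)`: maximum of `Mad(G_1)+…+Mad(G_k)` over all `k`-decompositions of `K_n`. -/
noncomputable def MSum (k n : ℕ) : ℝ :=
  sSup {s : ℝ | ∃ G : Fin k → SimpleGraph (Fin n), IsKDecomp G ∧ s = ∑ i, Mad (G i)}

/-- `M^L(k,N)`: maximum of `Mad(G_1)+…+Mad(G_k)` over all lists of `k` finite graphs
with `N` edges in total. -/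
noncomputable def MSumL (k N : ℕ) : ℝ :=
  sSup {s : ℝ | ∃ (V : Fin k → Type) (hV : ∀ i, Fintype (V i)) (G : ∀ i, SimpleGraph (V i)),
    (∑ i, @edgeCnt (V i) (hV i) (G i)) = N ∧ s = ∑ i, @Mad (V i) (hV i) (G i)}

/-- `g(m)`: maximum of `Mad(G)` over all finite simple graphs with exactly `m` edges. -/
noncomputable def gMax (m : ℕ) : ℝ :=
  sSup {d : ℝ | ∃ (V : Type) (hV : Fintype V) (G : SimpleGraph V),
    @edgeCnt V hV G = m ∧ d = @Mad V hV G}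

/-- The complete graph on the vertex subset `S` inside `Fin n`. -/
def cliqueOn {n : ℕ} (S : Finset (Fin n)) : SimpleGraph (Fin n) :=
  SimpleGraph.fromRel (fun a b => a ∈ S ∧ b ∈ S)

section Graph
variable {V : Type} [Fintype V] (G : SimpleGraph V)

lemma inducedEdgeCnt_le_edgeCnt (X : Finset V) : inducedEdgeCnt G X ≤ edgeCnt G := by
  classical
  exact Set.ncard_le_ncard (fun e he => he.1) (Set.toFinite _)

lemma edgeCnt_top (n : ℕ) : @edgeCnt (Fin n) _ ⊤ = n.choose 2 := by
  classical
  rw [edgeCnt, Set.ncard_eq_toFinset_card']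
  have : (⊤ : SimpleGraph (Fin n)).edgeSet.toFinset = (⊤ : SimpleGraph (Fin n)).edgeFinset := by
    simp [SimpleGraph.edgeFinset]
  rw [this, SimpleGraph.card_edgeFinset_top_eq_card_choose_two, Fintype.card_fin]

lemma inducedEdgeCnt_le_choose (X : Finset V) : inducedEdgeCnt G X ≤ X.card.choose 2 := by
  classical
  have hsub : {e : Sym2 V | e ∈ G.edgeSet ∧ ∀ v ∈ e, v ∈ X} ⊆
      (Sym2.map (Subtype.val : {x // x ∈ X} → V)) '' (⊤ : SimpleGraph {x // x ∈ X}).edgeSet := by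
    rintro e ⟨he, hX⟩
    induction e with
    | h a b =>
      have ha : a ∈ X := hX a (by simp)
      have hb : b ∈ X := hX b (by simp)
      have hab : a ≠ b := ((G.mem_edgeSet).mp he).ne
      refine ⟨s(⟨a, ha⟩, ⟨b, hb⟩), ?_, rfl⟩
      rw [SimpleGraph.mem_edgeSet]
      exact fun h => hab (congrArg Subtype.val h)
  calc inducedEdgeCnt G X ≤ ((Sym2.map (Subtype.val : {x // x ∈ X} → V)) ''
        (⊤ : SimpleGraph {x // x ∈ X}).edgeSet).ncard :=
        Set.ncard_le_ncard hsub (Set.toFinite _)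
    _ = (⊤ : SimpleGraph {x // x ∈ X}).edgeSet.ncard :=
        Set.ncard_image_of_injective _ (Sym2.map.injective Subtype.val_injective)
    _ = X.card.choose 2 := by
        rw [Set.ncard_eq_toFinset_card']
        have : (⊤ : SimpleGraph {x // x ∈ X}).edgeSet.toFinset
            = (⊤ : SimpleGraph {x // x ∈ X}).edgeFinset := by simp [SimpleGraph.edgeFinset]
        rw [this, SimpleGraph.card_edgeFinset_top_eq_card_choose_two, Fintype.card_coe]

lemma clique_le_inducedEdgeCnt (X : Finset V)
    (h : ∀ a ∈ X, ∀ b ∈ X, a ≠ b → G.Adj a b) :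
    X.card.choose 2 ≤ inducedEdgeCnt G X := by
  classical
  have hsub : (Sym2.map (Subtype.val : {x // x ∈ X} → V)) ''
      (⊤ : SimpleGraph {x // x ∈ X}).edgeSet ⊆
      {e : Sym2 V | e ∈ G.edgeSet ∧ ∀ v ∈ e, v ∈ X} := by
    rintro e ⟨e', he', rfl⟩
    induction e' with
    | h a b =>
      have hab : (a : V) ≠ b := fun hh => (((⊤ : SimpleGraph {x // x ∈ X}).mem_edgeSet).mp he').ne (Subtype.ext hh)
      constructor
      · exact (G.mem_edgeSet).mpr (h a a.2 b b.2 hab)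
      · intro v hv
        rcases Sym2.mem_iff.mp hv with rfl | rfl
        · exact a.2
        · exact b.2
  calc X.card.choose 2 = (⊤ : SimpleGraph {x // x ∈ X}).edgeSet.ncard := by
        rw [Set.ncard_eq_toFinset_card']
        have : (⊤ : SimpleGraph {x // x ∈ X}).edgeSet.toFinset
            = (⊤ : SimpleGraph {x // x ∈ X}).edgeFinset := by simp [SimpleGraph.edgeFinset]
        rw [this, SimpleGraph.card_edgeFinset_top_eq_card_choose_two, Fintype.card_coe]
    _ = ((Sym2.map (Subtype.val : {x // x ∈ X} → V)) ''
        (⊤ : SimpleGraph {x // x ∈ X}).edgeSet).ncard :=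
        (Set.ncard_image_of_injective _ (Sym2.map.injective Subtype.val_injective)).symm
    _ ≤ _ := Set.ncard_le_ncard hsub (Set.toFinite _)

lemma inducedEdgeCnt_univ : inducedEdgeCnt G (Finset.univ) = edgeCnt G := by
  classical
  unfold inducedEdgeCnt edgeCnt
  congr 1
  ext e
  simp

end Graph

section MadLemmas
variable {V : Type} [Fintype V] (G : SimpleGraph V)

lemma two_mul_choose_two (n : ℕ) : 2 * n.choose 2 = n * (n - 1) := by
  rw [Nat.choose_two_right, Nat.mul_div_cancel']
  have : Even ((n-1) * n) := by
    have := Nat.even_mul_succ_self (n - 1)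
    rcases n with _ | m
    · simpa using this
    · simpa [Nat.succ_sub_one] using this
  rcases this with ⟨c, hc⟩
  exact ⟨c, by rw [mul_comm] at hc; omega⟩

lemma choose_two_real (n : ℕ) : (n.choose 2 : ℝ) = n * ((n:ℝ) - 1) / 2 := by
  have h := two_mul_choose_two n
  rcases Nat.eq_zero_or_pos n with rfl | hn
  · simp
  · have h1 : ((2 * n.choose 2 : ℕ) : ℝ) = ((n * (n-1) : ℕ) : ℝ) := by rw [h]
    push_cast [Nat.cast_sub hn] at h1
    linarith

lemma mad_le {B : ℝ} (hB : 0 ≤ B)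
    (h : ∀ X : Finset V, X.Nonempty → 2 * (inducedEdgeCnt G X : ℝ) / (X.card : ℝ) ≤ B) :
    Mad G ≤ B := by
  apply Real.sSup_le _ hB
  rintro x ⟨X, hX, rfl⟩
  exact h X hX

lemma mad_bddAbove : BddAbove {d : ℝ | ∃ X : Finset V, X.Nonempty ∧
    d = 2 * (inducedEdgeCnt G X : ℝ) / (X.card : ℝ)} := by
  refine ⟨2 * (edgeCnt G : ℝ), ?_⟩
  rintro x ⟨X, hX, rfl⟩
  have h1 : (1 : ℝ) ≤ (X.card : ℝ) := by
    exact_mod_cast Nat.one_le_iff_ne_zero.mpr (Finset.card_ne_zero_of_mem hX.choose_spec)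
  have h2 : (inducedEdgeCnt G X : ℝ) ≤ (edgeCnt G : ℝ) := by
    exact_mod_cast inducedEdgeCnt_le_edgeCnt G X
  have h3 : 2 * (inducedEdgeCnt G X : ℝ) / (X.card : ℝ) ≤ 2 * (inducedEdgeCnt G X : ℝ) := by
    apply div_le_self (by positivity) h1
  linarith

lemma le_mad (X : Finset V) (hX : X.Nonempty) :
    2 * (inducedEdgeCnt G X : ℝ) / (X.card : ℝ) ≤ Mad G :=
  le_csSup (mad_bddAbove G) ⟨X, hX, rfl⟩

lemma mad_nonneg : 0 ≤ Mad G := by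
  rcases isEmpty_or_nonempty V with hV | hV
  · have : {d : ℝ | ∃ X : Finset V, X.Nonempty ∧
        d = 2 * (inducedEdgeCnt G X : ℝ) / (X.card : ℝ)} = ∅ := by
      ext d; simp only [Set.mem_empty_iff_false, iff_false, Set.mem_setOf_eq]
      rintro ⟨X, hX, -⟩
      exact hV.elim' hX.choose
    rw [Mad, this]
    simp [Real.sSup_empty]
  · refine le_trans ?_ (le_mad G {Classical.arbitrary V} (Finset.singleton_nonempty _))
    positivity

lemma mad_le_twice_edgeCnt : Mad G ≤ 2 * (edgeCnt G : ℝ) := by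
  apply mad_le G (by positivity)
  intro X hX
  have h1 : (1 : ℝ) ≤ (X.card : ℝ) := by
    exact_mod_cast Nat.one_le_iff_ne_zero.mpr (Finset.card_ne_zero_of_mem hX.choose_spec)
  have h2 : (inducedEdgeCnt G X : ℝ) ≤ (edgeCnt G : ℝ) := by
    exact_mod_cast inducedEdgeCnt_le_edgeCnt G X
  have h3 : 2 * (inducedEdgeCnt G X : ℝ) / (X.card : ℝ) ≤ 2 * (inducedEdgeCnt G X : ℝ) :=
    div_le_self (by positivity) h1
  linarith

/-- Per-graph level bound. -/
lemma mad_le_level (t s : ℕ) (ht : 1 ≤ t) (hst : s ≤ t) (hm : edgeCnt G = t.choose 2 + s) :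
    Mad G ≤ ((t : ℝ) - 1) + max 0 (2 * (s:ℝ) - t + 1) / ((t:ℝ) + 1) := by
  have htR : (1:ℝ) ≤ (t:ℝ) := by exact_mod_cast ht
  have hB : (0:ℝ) ≤ ((t : ℝ) - 1) + max 0 (2 * (s:ℝ) - t + 1) / ((t:ℝ) + 1) := by
    have : (0:ℝ) ≤ max 0 (2 * (s:ℝ) - t + 1) / ((t:ℝ) + 1) := by positivity
    linarith
  apply mad_le G hB
  intro X hX
  set j := X.card with hj
  have hj1 : 1 ≤ j := Finset.card_pos.mpr hX
  have hjR : (1:ℝ) ≤ (j:ℝ) := by exact_mod_cast hj1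
  have hjpos : (0:ℝ) < (j:ℝ) := by linarith
  set e := inducedEdgeCnt G X with he
  rcases le_or_gt j t with hcase | hcase
  · -- small subset: 2e/j ≤ j-1 ≤ t-1
    have h1 : (e : ℝ) ≤ (j:ℝ) * ((j:ℝ) - 1) / 2 := by
      have := inducedEdgeCnt_le_choose G X
      have h2 : (e:ℝ) ≤ (j.choose 2 : ℝ) := by exact_mod_cast this
      rw [choose_two_real] at h2; exact h2
    have h2 : 2 * (e:ℝ) / (j:ℝ) ≤ (j:ℝ) - 1 := by
      rw [div_le_iff₀ hjpos]; nlinarith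
    have h3 : (j:ℝ) ≤ (t:ℝ) := by exact_mod_cast hcase
    have : (0:ℝ) ≤ max 0 (2 * (s:ℝ) - t + 1) / ((t:ℝ) + 1) := by positivity
    linarith
  · -- big subset
    have hjt : (t:ℝ) + 1 ≤ (j:ℝ) := by exact_mod_cast hcase
    have htpos : (0:ℝ) < (t:ℝ) + 1 := by linarith
    have h1 : (e : ℝ) ≤ (t:ℝ)*((t:ℝ)-1)/2 + s := by
      have := inducedEdgeCnt_le_edgeCnt G X
      rw [hm] at this
      have h2 : (e:ℝ) ≤ (t.choose 2 : ℝ) + s := by exact_mod_cast this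
      rw [choose_two_real] at h2; linarith
    have h2 : 2 * (e:ℝ) / (j:ℝ) ≤ 2 * (e:ℝ) / ((t:ℝ)+1) := by
      apply div_le_div_of_nonneg_left _ htpos hjt
      positivity
    have h3 : 2 * (e:ℝ) / ((t:ℝ)+1) ≤ ((t : ℝ) - 1) + max 0 (2 * (s:ℝ) - t + 1) / ((t:ℝ) + 1) := by
      have hmax : 2 * (s:ℝ) - t + 1 ≤ max 0 (2 * (s:ℝ) - t + 1) := le_max_right _ _
      have key : 2 * (e:ℝ) ≤ (((t:ℝ) - 1) * ((t:ℝ)+1) + max 0 (2 * (s:ℝ) - t + 1)) := by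
        nlinarith
      calc 2 * (e:ℝ) / ((t:ℝ)+1)
          ≤ (((t:ℝ) - 1) * ((t:ℝ)+1) + max 0 (2 * (s:ℝ) - t + 1)) / ((t:ℝ)+1) :=
            (div_le_div_iff_of_pos_right htpos).mpr key
        _ = ((t : ℝ) - 1) + max 0 (2 * (s:ℝ) - t + 1) / ((t:ℝ) + 1) := by
            rw [add_div, mul_div_cancel_right₀ _ (ne_of_gt htpos)]
    linarith

end MadLemmas

lemma two_mul_choose_two' (n : ℕ) : 2 * n.choose 2 = n * (n - 1) := by
  rcases n with _ | m
  · simp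
  · rw [Nat.choose_two_right, Nat.succ_sub_one]
    have h : 2 ∣ (m + 1) * m := by
      have := Nat.even_mul_succ_self m
      rw [mul_comm] at this
      exact this.two_dvd
    exact Nat.mul_div_cancel' h

noncomputable def phiR (p x : ℕ) : ℝ := max 0 (2 * (x:ℝ) - p + 1)
noncomputable def slackR (p x : ℕ) : ℝ := (x:ℝ) / p - phiR p x / ((p:ℝ) + 1)

lemma phiR_nonneg (p x : ℕ) : 0 ≤ phiR p x := le_max_left _ _
lemma phiR_ge (p x : ℕ) : 2 * (x:ℝ) - p + 1 ≤ phiR p x := le_max_right _ _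
lemma phiR_zero (p : ℕ) (hp : 1 ≤ p) : phiR p 0 = 0 := by
  have h : (1:ℝ) ≤ (p:ℝ) := by exact_mod_cast hp
  simp only [phiR]
  rw [max_eq_left (by push_cast; linarith)]

lemma p1 (p t s b : ℕ) (hp : 2 ≤ p) (ht : 1 ≤ t) (hst : s ≤ t)
    (hb : (b:ℝ) = (s:ℝ) + ((t:ℝ) - p) * ((t:ℝ) - p - 1) / 2) :
    max 0 (2 * (s:ℝ) - t + 1) / ((t:ℝ) + 1) ≤ ((b / p : ℕ):ℝ) + phiR p (b % p) / ((p:ℝ)+1) := by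
  have hpR : (2:ℝ) ≤ (p:ℝ) := by exact_mod_cast hp
  have htR : (1:ℝ) ≤ (t:ℝ) := by exact_mod_cast ht
  have htpos : (0:ℝ) < (t:ℝ) + 1 := by linarith
  have hppos : (0:ℝ) < (p:ℝ) + 1 := by linarith
  have hsR : (s:ℝ) ≤ (t:ℝ) := by exact_mod_cast hst
  rcases le_or_gt p b with hbp | hbp
  · -- b ≥ p : RHS ≥ 1 ≥ LHS
    have h1 : 1 ≤ b / p := (Nat.one_le_div_iff (by omega)).mpr hbp
    have h1R : (1:ℝ) ≤ ((b / p : ℕ):ℝ) := by exact_mod_cast h1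
    have hLHS : max 0 (2 * (s:ℝ) - t + 1) / ((t:ℝ) + 1) ≤ 1 := by
      rw [div_le_one htpos]
      apply max_le (by linarith) (by linarith)
    have : (0:ℝ) ≤ phiR p (b % p) / ((p:ℝ)+1) := div_nonneg (phiR_nonneg _ _) (le_of_lt hppos)
    linarith
  · -- b < p
    rw [Nat.div_eq_of_lt hbp, Nat.mod_eq_of_lt hbp]
    push_cast
    rcases le_or_gt (2 * (s:ℝ) - t + 1) 0 with hx | hx
    · rw [max_eq_left hx]
      have : (0:ℝ) ≤ phiR p b / ((p:ℝ)+1) := div_nonneg (phiR_nonneg _ _) (le_of_lt hppos)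
      simp only [zero_div]
      linarith
    · rw [max_eq_right (le_of_lt hx)]
      set x := 2 * (s:ℝ) - t + 1 with hxdef
      have hX : 2 * (b:ℝ) - p + 1 = x + ((t:ℝ) - p)^2 := by rw [hb]; ring
      have hphi : x + ((t:ℝ) - p)^2 ≤ phiR p b := hX ▸ phiR_ge p b
      have hx1 : (1:ℝ) ≤ x := by
        have hts : t ≤ 2 * s := by
          by_contra hcon
          push_neg at hcon
          have : (2 * s + 1 : ℝ) ≤ (t:ℝ) := by exact_mod_cast hcon
          push_cast at this
          simp only [hxdef] at hx
          linarith
        have : (t:ℝ) ≤ 2 * (s:ℝ) := by exact_mod_cast hts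
        simp only [hxdef]; linarith
      have key : x / ((t:ℝ) + 1) ≤ (x + ((t:ℝ) - p)^2) / ((p:ℝ)+1) := by
        rw [div_le_div_iff₀ htpos hppos]
        rcases le_or_gt (p:ℕ) t with hpt | hpt
        · have hptR : (p:ℝ) ≤ (t:ℝ) := by exact_mod_cast hpt
          nlinarith [sq_nonneg ((t:ℝ) - p)]
        · have hptR : (t:ℝ) + 1 ≤ (p:ℝ) := by exact_mod_cast hpt
          have hbub : (b:ℝ) ≤ (p:ℝ) - 1 := by
            have : (b + 1 : ℝ) ≤ (p:ℝ) := by exact_mod_cast hbp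
            linarith
          set v := (p:ℝ) - t with hv
          have hv1 : (1:ℝ) ≤ v := by simp only [hv]; linarith
          have hxv : x + v^2 ≤ (p:ℝ) - 1 := by
            have : x + ((t:ℝ) - p)^2 = 2*(b:ℝ) - p + 1 := hX.symm
            have h2 : ((t:ℝ) - p)^2 = v^2 := by simp only [hv]; ring
            rw [h2] at this
            linarith
          have hstep : x + v^2 ≤ v * ((p:ℝ)+1) := by nlinarith
          have h3 : ((t:ℝ) - p)^2 = v^2 := by simp only [hv]; ring
          rw [h3]
          have ht1 : (t:ℝ) + 1 = (p:ℝ) + 1 - v := by simp only [hv]; ring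
          rw [ht1]
          nlinarith
      calc x / ((t:ℝ)+1) ≤ (x + ((t:ℝ) - p)^2) / ((p:ℝ)+1) := key
        _ ≤ phiR p b / ((p:ℝ)+1) := (div_le_div_iff_of_pos_right hppos).mpr hphi
        _ = 0 + phiR p b / ((p:ℝ)+1) := by ring

lemma phi_superadd (p x y : ℕ) (hp : 1 ≤ p) (h : x + y < p) :
    phiR p x + phiR p y ≤ phiR p (x + y) := by
  have hpR : (1:ℝ) ≤ (p:ℝ) := by exact_mod_cast hp
  have hge := phiR_ge p (x+y)
  have hnn := phiR_nonneg p (x+y)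
  push_cast at hge
  rcases max_cases (0:ℝ) (2 * (x:ℝ) - p + 1) with ⟨h1, h2⟩ | ⟨h1, h2⟩ <;>
    rcases max_cases (0:ℝ) (2 * (y:ℝ) - p + 1) with ⟨h3, h4⟩ | ⟨h3, h4⟩ <;>
    simp only [phiR] at * <;> rw [h1, h3] <;> push_cast at * <;> linarith

lemma phi_wrap (p x y : ℕ) (hp : 1 ≤ p) (hx : x < p) (hy : y < p) (h : p ≤ x + y) :
    phiR p x + phiR p y ≤ phiR p (x + y - p) + ((p:ℝ) + 1) := by
  have hpR : (1:ℝ) ≤ (p:ℝ) := by exact_mod_cast hp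
  have hxR : (x:ℝ) + 1 ≤ (p:ℝ) := by exact_mod_cast hx
  have hyR : (y:ℝ) + 1 ≤ (p:ℝ) := by exact_mod_cast hy
  have hm : ((x + y - p : ℕ):ℝ) = (x:ℝ) + y - p := by
    have h' : ((x + y - p : ℕ):ℝ) = ((x + y : ℕ):ℝ) - (p:ℝ) := Nat.cast_sub h
    rw [h']; push_cast; ring
  have hge := phiR_ge p (x+y-p)
  have hnn := phiR_nonneg p (x+y-p)
  rw [hm] at hge
  rcases max_cases (0:ℝ) (2 * (x:ℝ) - p + 1) with ⟨h1, h2⟩ | ⟨h1, h2⟩ <;>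
    rcases max_cases (0:ℝ) (2 * (y:ℝ) - p + 1) with ⟨h3, h4⟩ | ⟨h3, h4⟩ <;>
    simp only [phiR] at * <;> rw [h1, h3] <;> linarith

lemma slack_mod_superadd (p x y : ℕ) (hp : 2 ≤ p) (hx : x < p) (hy : y < p) :
    slackR p ((x + y) % p) ≤ slackR p x + slackR p y := by
  have hp1 : 1 ≤ p := by omega
  have hpR : (2:ℝ) ≤ (p:ℝ) := by exact_mod_cast hp
  have hppos : (0:ℝ) < (p:ℝ) := by linarith
  have hp1pos : (0:ℝ) < (p:ℝ) + 1 := by linarith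
  rcases lt_or_ge (x + y) p with h | h
  · rw [Nat.mod_eq_of_lt h]
    have hphi := phi_superadd p x y hp1 h
    have hdiv : (phiR p x + phiR p y) / ((p:ℝ)+1) ≤ phiR p (x+y) / ((p:ℝ)+1) :=
      (div_le_div_iff_of_pos_right hp1pos).mpr hphi
    simp only [slackR]
    push_cast
    rw [add_div] at hdiv ⊢
    push_cast at *
    linarith
  · have hlt : x + y - p < p := by omega
    have hmod : (x + y) % p = x + y - p := by
      rw [Nat.mod_eq_sub_mod h, Nat.mod_eq_of_lt hlt]
    rw [hmod]
    have hphi := phi_wrap p x y hp1 hx hy h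
    have hdiv : (phiR p x + phiR p y) / ((p:ℝ)+1) ≤ (phiR p (x+y-p) + ((p:ℝ)+1)) / ((p:ℝ)+1) :=
      (div_le_div_iff_of_pos_right hp1pos).mpr hphi
    have hm : ((x + y - p : ℕ):ℝ) = (x:ℝ) + y - p := by
      rw [Nat.cast_sub h]; push_cast; ring
    simp only [slackR]
    rw [hm, add_div, add_div, div_self (ne_of_gt hp1pos)] at *
    have hxy : ((x:ℝ) + y - p) / p = (x:ℝ)/p + (y:ℝ)/p - 1 := by
      field_simp
    rw [hxy]
    linarith

lemma slack_nonneg (p x : ℕ) (hp : 2 ≤ p) (hx : x < p) : 0 ≤ slackR p x := by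
  have hpR : (2:ℝ) ≤ (p:ℝ) := by exact_mod_cast hp
  have hxR : (x:ℝ) + 1 ≤ (p:ℝ) := by exact_mod_cast hx
  have hppos : (0:ℝ) < (p:ℝ) := by linarith
  have hp1pos : (0:ℝ) < (p:ℝ) + 1 := by linarith
  simp only [slackR]
  rw [sub_nonneg, div_le_div_iff₀ hp1pos hppos]
  rcases max_cases (0:ℝ) (2 * (x:ℝ) - p + 1) with ⟨h1, h2⟩ | ⟨h1, h2⟩ <;>
    simp only [phiR] <;> rw [h1] <;> nlinarith [Nat.cast_nonneg (α := ℝ) x]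

lemma slack_fold (p : ℕ) (hp : 2 ≤ p) (l : List ℕ) :
    slackR p (l.sum % p) ≤ (l.map (fun b => slackR p (b % p))).sum := by
  induction l with
  | nil =>
      simp only [List.sum_nil, Nat.zero_mod, List.map_nil]
      simp [slackR, phiR_zero p (by omega)]
  | cons a l ih =>
      simp only [List.sum_cons, List.map_cons, List.sum_cons]
      have h1 : (a + l.sum) % p = (a % p + l.sum % p) % p := by
        rw [Nat.add_mod]
      rw [h1]
      have h2 := slack_mod_superadd p (a % p) (l.sum % p) hp
        (Nat.mod_lt _ (by omega)) (Nat.mod_lt _ (by omega))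
      linarith [h2, ih]

lemma keyU (k p q r : ℕ) (t s : Fin k → ℕ) (hp : 2 ≤ p) (ht : ∀ i, 1 ≤ t i)
    (hs : ∀ i, s i ≤ t i) (hr : r < p)
    (hsum : ∑ i, (t i * (t i - 1) + 2 * s i) = k * (p * (p-1)) + 2*(q*p) + 2*r) :
    ∑ i, (((t i):ℝ) - 1 + max 0 (2*((s i):ℝ) - (t i) + 1) / (((t i):ℝ)+1))
      ≤ (k:ℝ)*((p:ℝ)-1) + q + phiR p r / ((p:ℝ)+1) := by
  classical
  have hpR : (2:ℝ) ≤ (p:ℝ) := by exact_mod_cast hp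
  have hppos : (0:ℝ) < (p:ℝ) := by linarith
  have hp1pos : (0:ℝ) < (p:ℝ) + 1 := by linarith
  set b : Fin k → ℕ := fun i => s i + ((t i - p).choose 2 + (p - t i + 1).choose 2) with hbdef
  have hbR : ∀ i, (b i : ℝ) = (s i:ℝ) + (((t i):ℝ) - p) * (((t i):ℝ) - p - 1) / 2 := by
    intro i
    rcases le_or_gt p (t i) with h | h
    · have h2 : p - t i = 0 := Nat.sub_eq_zero_of_le h
      have h3 : (p - t i + 1).choose 2 = 0 := by rw [h2]; decide
      have h4 := two_mul_choose_two' (t i - p)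
      have h5 : ((t i - p : ℕ):ℝ) = ((t i):ℝ) - p := Nat.cast_sub h
      rcases Nat.eq_or_lt_of_le h with heq | hlt
      · simp only [hbdef]
        rw [← heq]
        simp
      · have h7 : ((2 * (t i - p).choose 2 : ℕ):ℝ) = (((t i):ℝ) - p) * (((t i):ℝ) - p - 1) := by
          rw [h4]
          push_cast [Nat.cast_sub h, Nat.cast_sub (show 1 ≤ t i - p by omega)]
          ring
        simp only [hbdef, h3]
        push_cast
        push_cast at h7
        linarith
    · have h2 : t i - p = 0 := Nat.sub_eq_zero_of_le (le_of_lt h)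
      have h3 : (t i - p).choose 2 = 0 := by rw [h2]; decide
      have h4 := two_mul_choose_two' (p - t i + 1)
      have h5 : (p - t i + 1) - 1 = p - t i := by omega
      rw [h5] at h4
      have h6 : ((p - t i : ℕ):ℝ) = (p:ℝ) - t i := Nat.cast_sub (le_of_lt h)
      have h7 : ((2 * (p - t i + 1).choose 2 : ℕ):ℝ) = ((p:ℝ) - t i + 1) * ((p:ℝ) - t i) := by
        rw [h4]; push_cast [Nat.cast_sub (le_of_lt h)]; ring
      simp only [hbdef, h3]
      push_cast
      push_cast at h7
      nlinarith [h7]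
  -- pointwise bound
  have hpt : ∀ i, max 0 (2*((s i):ℝ) - (t i) + 1) / (((t i):ℝ)+1)
      ≤ ((b i / p : ℕ):ℝ) + phiR p (b i % p) / ((p:ℝ)+1) :=
    fun i => p1 p (t i) (s i) (b i) hp (ht i) (hs i) (hbR i)
  -- nat key identity
  have hreal : (p:ℝ) * (∑ i, ((t i):ℝ)) + (∑ i, ((b i):ℝ))
      = (k:ℝ)*p*p + (q:ℝ)*p + r := by
    have hcast : ∀ i, ((t i * (t i - 1) + 2 * s i : ℕ):ℝ)
        = ((t i):ℝ) * (((t i):ℝ) - 1) + 2 * (s i:ℝ) := by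
      intro i
      push_cast [Nat.cast_sub (ht i)]
      ring
    have hsumR : ∑ i, (((t i):ℝ) * (((t i):ℝ) - 1) + 2 * ((s i):ℝ))
        = (k:ℝ) * ((p:ℝ) * ((p:ℝ)-1)) + 2*((q:ℝ)*p) + 2*(r:ℝ) := by
      have := congrArg (fun n : ℕ => (n:ℝ)) hsum
      push_cast [Nat.cast_sub (show 1 ≤ p by omega)] at this
      rw [← this]
      apply Finset.sum_congr rfl
      intro i _
      rw [Nat.cast_sub (ht i), Nat.cast_one]
    have h2b : ∀ i, 2 * ((b i):ℝ) = 2 * ((s i):ℝ) + (((t i):ℝ) * (((t i):ℝ) - 1)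
        - 2 * (p:ℝ) * ((t i):ℝ) + (p:ℝ)*(p:ℝ) + (p:ℝ)) := by
      intro i
      rw [hbR i]; ring
    have hsum2 : 2 * ∑ i, ((b i):ℝ) = ∑ i, (2 * ((s i):ℝ) + (((t i):ℝ) * (((t i):ℝ) - 1)
        - 2 * (p:ℝ) * ((t i):ℝ) + (p:ℝ)*(p:ℝ) + (p:ℝ))) := by
      rw [Finset.mul_sum]
      exact Finset.sum_congr rfl (fun i _ => h2b i)
    rw [Finset.sum_add_distrib] at hsumR hsum2
    simp only [Finset.sum_add_distrib, Finset.sum_sub_distrib, Finset.sum_const,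
      Finset.card_univ, Fintype.card_fin, nsmul_eq_mul, ← Finset.mul_sum] at hsum2
    have e3 : ∑ x : Fin k, 2 * ((s x):ℝ) = 2 * ∑ x : Fin k, ((s x):ℝ) := by
      rw [Finset.mul_sum]
    linarith [hsumR, hsum2, e3]
  have hnat : p * (∑ i, t i) + (∑ i, b i) = k*p*p + q*p + r := by
    have : ((p * (∑ i, t i) + (∑ i, b i) : ℕ) : ℝ) = ((k*p*p + q*p + r : ℕ):ℝ) := by
      push_cast
      linarith [hreal]
    exact_mod_cast this
  -- mod fact
  have hTle : ∑ i, t i ≤ k*p + q := by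
    by_contra hcon
    push_neg at hcon
    have h1 : p * (k*p + q + 1) ≤ p * (∑ i, t i) := Nat.mul_le_mul_left p hcon
    have : p * (k*p+q+1) = k*p*p + q*p + p := by ring
    omega
  have hBval : (∑ i, b i) = p * (k*p + q - ∑ i, t i) + r := by
    have h1 : p * (k*p + q - ∑ i, t i) = p * (k*p+q) - p * (∑ i, t i) := Nat.mul_sub p _ _
    have h2 : p * (∑ i, t i) ≤ p * (k*p+q) := Nat.mul_le_mul_left p hTle
    have h3 : p * (k*p+q) = k*p*p + q*p := by ring
    omega
  have hBmod : (∑ i, b i) % p = r := by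
    rw [hBval, Nat.mul_add_mod, Nat.mod_eq_of_lt hr]
  -- fold slack
  have hslack : slackR p r ≤ ∑ i, slackR p (b i % p) := by
    have hl := slack_fold p hp (List.ofFn b)
    have h1 : (List.ofFn b).sum = ∑ i, b i := List.sum_ofFn
    have h2 : ((List.ofFn b).map (fun x => slackR p (x % p))).sum
        = ∑ i, slackR p (b i % p) := by
      rw [List.map_ofFn]
      exact List.sum_ofFn
    rw [h1, hBmod, h2] at hl
    exact hl
  -- combine
  have hsum_le : ∑ i, (((t i):ℝ) - 1 + max 0 (2*((s i):ℝ) - (t i) + 1) / (((t i):ℝ)+1))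
      ≤ ∑ i, (((t i):ℝ) - 1 + (((b i / p : ℕ):ℝ) + phiR p (b i % p) / ((p:ℝ)+1))) := by
    apply Finset.sum_le_sum
    intro i _
    linarith [hpt i]
  have hdm : ∀ i, ((b i / p : ℕ):ℝ) + phiR p (b i % p) / ((p:ℝ)+1)
      = ((b i):ℝ)/p - slackR p (b i % p) := by
    intro i
    have hdiv := Nat.div_add_mod (b i) p
    have : (p:ℝ) * ((b i / p : ℕ):ℝ) + ((b i % p : ℕ):ℝ) = ((b i):ℝ) := by
      exact_mod_cast congrArg (fun n : ℕ => (n:ℝ)) hdiv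
    have h9 : ((b i / p : ℕ):ℝ) = ((b i):ℝ)/p - ((b i % p : ℕ):ℝ)/p := by
      field_simp
      linarith [this]
    simp only [slackR]
    rw [h9]
    ring
  have hsum2 : ∑ i, (((t i):ℝ) - 1 + (((b i / p : ℕ):ℝ) + phiR p (b i % p) / ((p:ℝ)+1)))
      = (∑ i, ((t i):ℝ)) - k + (∑ i, ((b i):ℝ))/p - ∑ i, slackR p (b i % p) := by
    have : ∀ i, ((t i):ℝ) - 1 + (((b i / p : ℕ):ℝ) + phiR p (b i % p) / ((p:ℝ)+1))
        = (((t i):ℝ) - 1) + (((b i):ℝ)/p - slackR p (b i % p)) := by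
      intro i; rw [hdm i]
    rw [Finset.sum_congr rfl (fun i _ => this i), Finset.sum_add_distrib,
      Finset.sum_sub_distrib, Finset.sum_sub_distrib, Finset.sum_const,
      Finset.card_univ, Fintype.card_fin, nsmul_eq_mul, mul_one, ← Finset.sum_div]
    ring
  rw [hsum2] at hsum_le
  have hfinal : (∑ i, ((t i):ℝ)) - k + (∑ i, ((b i):ℝ))/p - ∑ i, slackR p (b i % p)
      ≤ (k:ℝ)*((p:ℝ)-1) + q + phiR p r / ((p:ℝ)+1) := by
    have hB : (∑ i, ((b i):ℝ))/p = (k:ℝ)*p + q + (r:ℝ)/p - (∑ i, ((t i):ℝ)) := by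
      have : (∑ i, ((b i):ℝ)) = (k:ℝ)*p*p + (q:ℝ)*p + r - (p:ℝ) * (∑ i, ((t i):ℝ)) := by
        linarith [hreal]
      rw [this]
      field_simp
    have hslackr : slackR p r = (r:ℝ)/p - phiR p r/((p:ℝ)+1) := rfl
    linarith [hslack, hslackr]
  linarith

/-- level existence -/
lemma exists_level (m : ℕ) : ∃ t s : ℕ, 1 ≤ t ∧ s ≤ t ∧ m = t.choose 2 + s := by
  induction m with
  | zero => exact ⟨1, 0, le_refl _, by omega, by decide⟩
  | succ n ih =>
      obtain ⟨t, s, ht, hs, hn⟩ := ih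
      rcases lt_or_eq_of_le hs with h | h
      · exact ⟨t, s + 1, ht, by omega, by omega⟩
      · refine ⟨t + 1, 1, by omega, by omega, ?_⟩
        have h2 : (t+1).choose 2 = t.choose 1 + t.choose 2 := Nat.choose_succ_succ t 1
        rw [h2, Nat.choose_one_right]
        omega

/-- the clique-minus-star graph -/
def Hg (n c : ℕ) : SimpleGraph (Fin n) where
  Adj a b := a ≠ b ∧ ¬(a.val = n - 1 ∧ c ≤ b.val ∧ b.val ≠ n - 1)
    ∧ ¬(b.val = n - 1 ∧ c ≤ a.val ∧ a.val ≠ n - 1)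
  symm := ⟨fun a b h => ⟨h.1.symm, h.2.2, h.2.1⟩⟩
  loopless := ⟨fun a h => h.1 rfl⟩

lemma Hg_eq_top (n c : ℕ) (h : n - 1 ≤ c) : Hg n c = ⊤ := by
  ext a b
  simp only [Hg, SimpleGraph.top_adj]
  constructor
  · exact fun hh => hh.1
  · intro hab
    refine ⟨hab, ?_, ?_⟩
    · rintro ⟨h1, h2, h3⟩
      exact h3 (by have := b.isLt; omega)
    · rintro ⟨h1, h2, h3⟩
      exact h3 (by have := a.isLt; omega)

lemma Hg_edgeSet (p r : ℕ) (hr : r < p) :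
    (Hg (p+1) r).edgeSet = (⊤ : SimpleGraph (Fin (p+1))).edgeSet \
      ((fun j : Fin (p+1) => s(j, (⟨p, by omega⟩ : Fin (p+1)))) ''
        {j : Fin (p+1) | r ≤ j.val ∧ j.val < p}) := by
  ext e
  induction e with
  | h a b =>
    simp only [SimpleGraph.mem_edgeSet, Set.mem_diff, SimpleGraph.top_adj, Set.mem_image,
      Set.mem_setOf_eq]
    constructor
    · rintro ⟨hab, h2, h3⟩
      refine ⟨hab, ?_⟩
      rintro ⟨j, ⟨hj1, hj2⟩, hj3⟩
      rw [Sym2.eq_iff] at hj3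
      rcases hj3 with ⟨rfl, rfl⟩ | ⟨rfl, rfl⟩
      · exact h3 ⟨rfl, hj1, by omega⟩
      · exact h2 ⟨rfl, hj1, by omega⟩
    · rintro ⟨hab, hnot⟩
      refine ⟨hab, ?_, ?_⟩
      · rintro ⟨h1, h2, h3⟩
        exact hnot ⟨b, ⟨h2, by have := b.isLt; omega⟩,
          by rw [Sym2.eq_iff]; right; exact ⟨rfl, by apply Fin.ext; simp [h1]⟩⟩
      · rintro ⟨h1, h2, h3⟩
        exact hnot ⟨a, ⟨h2, by have := a.isLt; omega⟩,
          by rw [Sym2.eq_iff]; left; exact ⟨rfl, by apply Fin.ext; simp [h1]⟩⟩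

lemma Hg_edgeCnt (p r : ℕ) (hp : 1 ≤ p) (hr : r < p) :
    edgeCnt (Hg (p+1) r) = p.choose 2 + r := by
  classical
  have hE := Hg_edgeSet p r hr
  set lastv : Fin (p+1) := ⟨p, by omega⟩ with hlast
  set D := ((fun j : Fin (p+1) => s(j, lastv)) '' {j : Fin (p+1) | r ≤ j.val ∧ j.val < p})
    with hD
  have hDsub : D ⊆ (⊤ : SimpleGraph (Fin (p+1))).edgeSet := by
    rintro e ⟨j, ⟨hj1, hj2⟩, rfl⟩
    rw [SimpleGraph.mem_edgeSet]
    simp only [SimpleGraph.top_adj]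
    intro hcon
    rw [hcon] at hj2
    simp [hlast] at hj2
  have hDcard : D.ncard = p - r := by
    rw [hD, Set.ncard_image_of_injOn (by
      intro x hx y hy hxy
      rw [Sym2.congr_left] at hxy
      exact hxy)]
    have : {j : Fin (p+1) | r ≤ j.val ∧ j.val < p} =
        ↑(Finset.univ.filter (fun j : Fin (p+1) => r ≤ j.val ∧ j.val < p)) := by
      ext j; simp
    rw [this, Set.ncard_coe_finset]
    rw [Finset.card_bij (fun (j : Fin (p+1)) _ => j.val)
      (by intro a ha; simp at ha ⊢; omega)
      (by intro a ha b hb hab; exact Fin.ext hab)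
      (by intro b hb
          simp only [Finset.mem_Ico] at hb
          refine ⟨⟨b, by omega⟩, by simp; omega, rfl⟩)
      (t := Finset.Ico r p)]
    exact Nat.card_Ico r p
  rw [edgeCnt, hE, Set.ncard_diff hDsub (Set.toFinite _), hDcard]
  have htop : (⊤ : SimpleGraph (Fin (p+1))).edgeSet.ncard = (p+1).choose 2 := edgeCnt_top (p+1)
  rw [htop]
  have h2 : (p+1).choose 2 = p + p.choose 2 := by
    rw [Nat.choose_succ_succ p 1, Nat.choose_one_right]
  omega

lemma mad_top (n : ℕ) (hn : 1 ≤ n) : Mad (⊤ : SimpleGraph (Fin n)) = (n:ℝ) - 1 := by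
  have hnR : (1:ℝ) ≤ (n:ℝ) := by exact_mod_cast hn
  apply le_antisymm
  · have h := mad_le_level (⊤ : SimpleGraph (Fin n)) n 0 hn (by omega) (by rw [edgeCnt_top]; ring)
    have h0 : max 0 (2 * ((0:ℕ):ℝ) - n + 1) = 0 := by
      rw [max_eq_left]; push_cast; linarith
    rw [h0] at h
    simpa using h
  · have h := le_mad (⊤ : SimpleGraph (Fin n)) Finset.univ
      (Finset.univ_nonempty_iff.mpr ⟨⟨0, by omega⟩⟩)
    rw [inducedEdgeCnt_univ, edgeCnt_top] at h
    have hc : (Finset.univ : Finset (Fin n)).card = n := by simp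
    rw [hc, choose_two_real] at h
    have hnpos : (0:ℝ) < n := by linarith
    have : 2 * ((n:ℝ) * ((n:ℝ)-1)/2) / n = (n:ℝ) - 1 := by field_simp <;> ring
    rw [this] at h
    exact h

lemma mad_Hg (p r : ℕ) (hp : 2 ≤ p) (hr : r < p) :
    Mad (Hg (p+1) r) = ((p:ℝ) - 1) + phiR p r / ((p:ℝ)+1) := by
  classical
  have hpR : (2:ℝ) ≤ (p:ℝ) := by exact_mod_cast hp
  have hrR : (r:ℝ) + 1 ≤ (p:ℝ) := by exact_mod_cast hr
  apply le_antisymm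
  · have h := mad_le_level (Hg (p+1) r) p r (by omega) (by omega)
      (Hg_edgeCnt p r (by omega) hr)
    exact h
  · rcases le_or_gt (2*r+1) p with hcase | hcase
    · -- phiR = 0, use clique on first p vertices
      have hphi : phiR p r = 0 := by
        have : (2*(r:ℝ) - p + 1) ≤ 0 := by
          have : (2*r+1 : ℝ) ≤ (p:ℝ) := by exact_mod_cast hcase
          linarith
        simp only [phiR]
        rw [max_eq_left this]
      rw [hphi]
      set X : Finset (Fin (p+1)) := Finset.univ.filter (fun a => a.val < p) with hX
      have hXcard : X.card = p := by
        rw [hX]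
        rw [Finset.card_bij (fun (j : Fin (p+1)) _ => j.val)
          (by intro a ha; simp at ha ⊢; omega)
          (by intro a ha b hb hab; exact Fin.ext hab)
          (by intro b hb
              simp only [Finset.mem_range] at hb
              refine ⟨⟨b, by omega⟩, by simp; omega, rfl⟩)
          (t := Finset.range p)]
        exact Finset.card_range p
      have hclique : ∀ a ∈ X, ∀ b ∈ X, a ≠ b → (Hg (p+1) r).Adj a b := by
        intro a ha b hb hab
        simp only [hX, Finset.mem_filter] at ha hb
        refine ⟨hab, ?_, ?_⟩
        · rintro ⟨h1, -, -⟩; omega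
        · rintro ⟨h1, -, -⟩; omega
      have he := clique_le_inducedEdgeCnt (Hg (p+1) r) X hclique
      rw [hXcard] at he
      have hXne : X.Nonempty := by
        rw [← Finset.card_pos, hXcard]; omega
      have h := le_mad (Hg (p+1) r) X hXne
      rw [hXcard] at h
      have heR : ((p.choose 2 : ℕ):ℝ) ≤ (inducedEdgeCnt (Hg (p+1) r) X : ℝ) := by
        exact_mod_cast he
      rw [choose_two_real] at heR
      have hppos : (0:ℝ) < (p:ℝ) := by linarith
      have h2 : ((p:ℝ) - 1) + 0 / ((p:ℝ)+1) ≤ 2 * (inducedEdgeCnt (Hg (p+1) r) X : ℝ) / p := by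
        rw [zero_div, add_zero, le_div_iff₀ hppos]
        nlinarith
      linarith
    · -- use the whole vertex set
      have hphi : phiR p r = 2*(r:ℝ) - p + 1 := by
        have : (0:ℝ) ≤ 2*(r:ℝ) - p + 1 := by
          have : (p:ℝ) ≤ 2*r+1 := by exact_mod_cast (le_of_lt hcase)
          linarith
        simp only [phiR]
        rw [max_eq_right this]
      have h := le_mad (Hg (p+1) r) Finset.univ
        (Finset.univ_nonempty_iff.mpr ⟨⟨0, by omega⟩⟩)
      rw [inducedEdgeCnt_univ, Hg_edgeCnt p r (by omega) hr] at h
      have hc : (Finset.univ : Finset (Fin (p+1))).card = p + 1 := by simp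
      rw [hc] at h
      have hcast : ((p.choose 2 + r : ℕ):ℝ) = (p:ℝ)*((p:ℝ)-1)/2 + r := by
        push_cast [choose_two_real]; ring
      rw [hcast] at h
      have hp1pos : (0:ℝ) < (p:ℝ) + 1 := by linarith
      have hval : 2 * ((p:ℝ)*((p:ℝ)-1)/2 + r) / ((p:ℝ)+1)
          = ((p:ℝ) - 1) + (2*(r:ℝ) - p + 1) / ((p:ℝ)+1) := by
        field_simp
        ring
      rw [hphi]
      push_cast at h
      linarith [h, hval]

lemma sum_split {M : Type} [AddCommMonoid M] (k q : ℕ) (hq : q < k) (g : ℕ → M) :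
    ∑ n ∈ Finset.range k, g n
      = (∑ n ∈ Finset.range q, g n) + g q + ∑ n ∈ Finset.Ico (q+1) k, g n := by
  have h1 := Finset.sum_Ico_consecutive g (Nat.zero_le (q+1)) (show q+1 ≤ k by omega)
  rw [Finset.range_eq_Ico, ← h1, ← Finset.range_eq_Ico, Finset.sum_range_succ]

lemma msumL_le (N k p q r : ℕ) (hp : 2 ≤ p) (hr : r < p)
    (hN : N = k * p.choose 2 + q * p + r) :
    MSumL k N ≤ (k:ℝ)*((p:ℝ)-1) + q + phiR p r / ((p:ℝ)+1) := by
  have hpR : (2:ℝ) ≤ (p:ℝ) := by exact_mod_cast hp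
  have hRHS : (0:ℝ) ≤ (k:ℝ)*((p:ℝ)-1) + q + phiR p r / ((p:ℝ)+1) := by
    have h1 : (0:ℝ) ≤ phiR p r / ((p:ℝ)+1) := div_nonneg (phiR_nonneg _ _) (by linarith)
    have h2 : (0:ℝ) ≤ (k:ℝ)*((p:ℝ)-1) := mul_nonneg (Nat.cast_nonneg k) (by linarith)
    have h3 : (0:ℝ) ≤ (q:ℝ) := Nat.cast_nonneg q
    linarith
  apply Real.sSup_le _ hRHS
  rintro x ⟨V, hV, G, hsum, rfl⟩
  have hex : ∀ i, ∃ t s : ℕ, 1 ≤ t ∧ s ≤ t ∧ @edgeCnt (V i) (hV i) (G i) = t.choose 2 + s :=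
    fun i => exists_level _
  choose t s h1 h2 h3 using hex
  have hb : ∀ i, @Mad (V i) (hV i) (G i)
      ≤ ((t i:ℝ) - 1) + max 0 (2*(s i:ℝ) - t i + 1)/((t i:ℝ)+1) :=
    fun i => @mad_le_level (V i) (hV i) (G i) (t i) (s i) (h1 i) (h2 i) (h3 i)
  have hNsum : ∑ i, ((t i).choose 2 + s i) = N := by
    rw [← hsum]
    exact Finset.sum_congr rfl (fun i _ => (h3 i).symm)
  have hsum2 : ∑ i, (t i * (t i - 1) + 2 * s i) = k*(p*(p-1)) + 2*(q*p) + 2*r := by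
    have e1 : ∀ i : Fin k, t i * (t i - 1) + 2 * s i = 2 * ((t i).choose 2 + s i) := by
      intro i
      rw [Nat.mul_add, two_mul_choose_two]
    rw [Finset.sum_congr rfl (fun i _ => e1 i), ← Finset.mul_sum, hNsum, hN]
    have hpc : p * (p-1) = 2 * p.choose 2 := (two_mul_choose_two p).symm
    rw [hpc]
    ring
  calc ∑ i, @Mad (V i) (hV i) (G i)
      ≤ ∑ i, (((t i):ℝ) - 1 + max 0 (2*((s i):ℝ) - (t i) + 1) / (((t i):ℝ)+1)) :=
        Finset.sum_le_sum (fun i _ => hb i)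
    _ ≤ _ := keyU k p q r t s hp h1 h2 hr hsum2

lemma msumL_ge (N k p q r : ℕ) (hp : 2 ≤ p) (hr : r < p) (hq : q < k)
    (hN : N = k * p.choose 2 + q * p + r) :
    (k:ℝ)*((p:ℝ)-1) + q + phiR p r / ((p:ℝ)+1) ≤ MSumL k N := by
  classical
  have hpR : (2:ℝ) ≤ (p:ℝ) := by exact_mod_cast hp
  apply le_csSup
  · refine ⟨2*(N:ℝ), ?_⟩
    rintro x ⟨V, hV, G, hsum, rfl⟩
    have h1 : ∀ i, @Mad (V i) (hV i) (G i) ≤ 2 * ((@edgeCnt (V i) (hV i) (G i) : ℕ) : ℝ) :=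
      fun i => @mad_le_twice_edgeCnt (V i) (hV i) (G i)
    calc ∑ i, @Mad (V i) (hV i) (G i)
        ≤ ∑ i, 2 * ((@edgeCnt (V i) (hV i) (G i) : ℕ) : ℝ) := Finset.sum_le_sum (fun i _ => h1 i)
      _ = 2 * ((∑ i, @edgeCnt (V i) (hV i) (G i) : ℕ) : ℝ) := by
          rw [← Finset.mul_sum, Nat.cast_sum]
      _ = 2 * (N:ℝ) := by rw [hsum]
  · -- membership
    refine ⟨fun _ => Fin (p+1), fun _ => inferInstance,
      fun i => if i.val < q then (⊤ : SimpleGraph (Fin (p+1)))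
        else if i.val = q then Hg (p+1) r else Hg (p+1) 0, ?_, ?_⟩
    · -- edge count
      have hec : ∀ i : Fin k, edgeCnt (if i.val < q then (⊤ : SimpleGraph (Fin (p+1)))
          else if i.val = q then Hg (p+1) r else Hg (p+1) 0)
          = (fun n => if n < q then p.choose 2 + p else if n = q then p.choose 2 + r
              else p.choose 2) i.val := by
        intro i
        by_cases hlt : i.val < q
        · simp only [if_pos hlt]
          have h2 : (p+1).choose 2 = p + p.choose 2 := by
            rw [Nat.choose_succ_succ p 1, Nat.choose_one_right]
          rw [edgeCnt_top, h2]
          omega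
        · by_cases heq : i.val = q
          · simp only [if_neg hlt, if_pos heq]
            exact Hg_edgeCnt p r (by omega) hr
          · simp only [if_neg hlt, if_neg heq]
            rw [Hg_edgeCnt p 0 (by omega) (by omega)]
            omega
      rw [Finset.sum_congr rfl (fun i _ => hec i)]
      rw [Fin.sum_univ_eq_sum_range (fun n => if n < q then p.choose 2 + p
        else if n = q then p.choose 2 + r else p.choose 2) k]
      rw [sum_split k q hq]
      have e1 : ∑ n ∈ Finset.range q, (if n < q then p.choose 2 + p
          else if n = q then p.choose 2 + r else p.choose 2) = q * (p.choose 2 + p) := by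
        rw [Finset.sum_congr rfl (fun n hn => by
          rw [if_pos (Finset.mem_range.mp hn)]), Finset.sum_const, Finset.card_range,
          smul_eq_mul]
      have e2 : (if q < q then p.choose 2 + p else if q = q then p.choose 2 + r
          else p.choose 2) = p.choose 2 + r := by simp
      have e3 : ∑ n ∈ Finset.Ico (q+1) k, (if n < q then p.choose 2 + p
          else if n = q then p.choose 2 + r else p.choose 2) = (k - q - 1) * p.choose 2 := by
        rw [Finset.sum_congr rfl (fun n hn => by
          have := Finset.mem_Ico.mp hn
          rw [if_neg (by omega), if_neg (by omega)]), Finset.sum_const, Nat.card_Ico]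
        have : k - (q+1) = k - q - 1 := by omega
        rw [this, smul_eq_mul]
      rw [e1, e2, e3, hN]
      have hm : q + 1 + (k - q - 1) = k := by omega
      set C := p.choose 2
      calc q * (C + p) + (C + r) + (k - q - 1) * C
          = (q + 1 + (k - q - 1)) * C + q * p + r := by ring
        _ = k * C + q * p + r := by rw [hm]
    · -- Mad sum
      have hmd : ∀ i : Fin k, @Mad (Fin (p+1)) _ (if i.val < q then (⊤ : SimpleGraph (Fin (p+1)))
          else if i.val = q then Hg (p+1) r else Hg (p+1) 0)
          = (fun n => if n < q then (p:ℝ) else if n = q then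
              ((p:ℝ) - 1) + phiR p r / ((p:ℝ)+1) else ((p:ℝ) - 1)) i.val := by
        intro i
        by_cases hlt : i.val < q
        · simp only [if_pos hlt]
          rw [mad_top (p+1) (by omega)]
          push_cast
          ring
        · by_cases heq : i.val = q
          · simp only [if_neg hlt, if_pos heq]
            exact mad_Hg p r hp hr
          · simp only [if_neg hlt, if_neg heq]
            rw [mad_Hg p 0 hp (by omega), phiR_zero p (by omega)]
            simp
      rw [Finset.sum_congr rfl (fun i _ => hmd i)]
      rw [Fin.sum_univ_eq_sum_range (fun n => if n < q then (p:ℝ) else if n = q then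
              ((p:ℝ) - 1) + phiR p r / ((p:ℝ)+1) else ((p:ℝ) - 1)) k]
      rw [sum_split k q hq]
      have e1 : ∑ n ∈ Finset.range q, (if n < q then (p:ℝ) else if n = q then
          ((p:ℝ) - 1) + phiR p r / ((p:ℝ)+1) else ((p:ℝ) - 1)) = (q:ℝ) * p := by
        rw [Finset.sum_congr rfl (fun n hn => by
          rw [if_pos (Finset.mem_range.mp hn)]), Finset.sum_const, Finset.card_range,
          nsmul_eq_mul]
      have e2 : (if q < q then (p:ℝ) else if q = q then
          ((p:ℝ) - 1) + phiR p r / ((p:ℝ)+1) else ((p:ℝ) - 1))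
          = ((p:ℝ) - 1) + phiR p r / ((p:ℝ)+1) := by simp
      have e3 : ∑ n ∈ Finset.Ico (q+1) k, (if n < q then (p:ℝ) else if n = q then
          ((p:ℝ) - 1) + phiR p r / ((p:ℝ)+1) else ((p:ℝ) - 1))
          = ((k:ℝ) - q - 1) * ((p:ℝ) - 1) := by
        rw [Finset.sum_congr rfl (fun n hn => by
          have := Finset.mem_Ico.mp hn
          rw [if_neg (by omega), if_neg (by omega)]), Finset.sum_const, Nat.card_Ico,
          nsmul_eq_mul]
        congr 1
        have hcs : ((k - (q+1) : ℕ):ℝ) = (k:ℝ) - ((q+1:ℕ):ℝ) := Nat.cast_sub (by omega)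
        rw [hcs]
        push_cast
        ring
      rw [e1, e2, e3]
      ring

/-- exact formula for the list extremal function `M^L(k,N)`. -/
theorem madSumList_formula (N k p q r : ℕ) (hk : 2 ≤ k) (hkN : k ≤ N) (hp : 2 ≤ p)
    (h1 : k * Nat.choose p 2 ≤ N) (h2 : N < k * Nat.choose (p + 1) 2)
    (hN : N = k * Nat.choose p 2 + q * p + r) (hq : q < k) (hr : r < p) :
    (2 * r + 1 ≤ p → MSumL k N = (k : ℝ) * p - k + q) ∧
    (p ≤ 2 * r + 1 →
      MSumL k N = (k : ℝ) * p - k + q + 1 - 2 * ((p : ℝ) - r) / ((p : ℝ) + 1)) := by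
  have hT : MSumL k N = (k:ℝ)*((p:ℝ)-1) + q + phiR p r / ((p:ℝ)+1) :=
    le_antisymm (msumL_le N k p q r hp hr hN) (msumL_ge N k p q r hp hr hq hN)
  have hpR : (2:ℝ) ≤ (p:ℝ) := by exact_mod_cast hp
  have hp1 : ((p:ℝ)+1) ≠ 0 := by positivity
  constructor
  · intro hc
    rw [hT]
    have hphi : phiR p r = 0 := by
      have hcR : (2*r+1:ℝ) ≤ (p:ℝ) := by exact_mod_cast hc
      simp only [phiR]
      rw [max_eq_left (by push_cast; linarith)]
    rw [hphi, zero_div]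
    ring
  · intro hc
    rw [hT]
    have hphi : phiR p r = 2*(r:ℝ) - p + 1 := by
      have hcR : (p:ℝ) ≤ (2*r+1:ℝ) := by exact_mod_cast hc
      simp only [phiR]
      rw [max_eq_right (by push_cast; linarith)]
    rw [hphi]
    field_simp
    ring
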